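/- Let α and β be ordinals below ε₀ with coordinate bound |β| < b (for a natural number b) and β < α. Then β ≤ α[b], where α[b] is the fundamental-sequence approximation of α. -/

import Mathlib

open Ordinal

noncomputable def eps0 : Ordinal.{0} := Ordinal.nfp (fun a => Ordinal.omega0 ^ a) 0

/-- Rebuild an ordinal from a list of (exponent, coefficient) pairs. -/
noncomputable def ofCNF (L : List (Ordinal.{0} × Ordinal.{0})) : Ordinal.{0} :=
  L.foldr (fun p r => Ordinal.omega0 ^ p.1 * p.2 + r) 0

open scoped Classical in
/-- The fundamental-sequence approximation `α[x]`. -/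
noncomputable def fundSeq (x : ℕ) : Ordinal.{0} → Ordinal.{0} :=
  WellFounded.fix Ordinal.lt_wf (fun α IH =>
    if hα : α = 0 then 0
    else
      match hL : (Ordinal.CNF Ordinal.omega0 α).getLast? with
      | none => 0
      | some p =>
        if p.1 = 0 then Ordinal.pred α
        else if h : p.1 < α then
          ofCNF ((Ordinal.CNF Ordinal.omega0 α).dropLast
            ++ [(p.1, p.2 - 1), (IH p.1 h, (x : Ordinal))])
        else 0)

open scoped Classical in
/-- Transfinite iterates `g^α` of `g : ℕ → ℕ`, defined by `g^0(b) = b` and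
`g^α(b) = g^{α[b]}(g b)`. -/
noncomputable def iterOrd (g : ℕ → ℕ) : Ordinal.{0} → ℕ → ℕ :=
  WellFounded.fix Ordinal.lt_wf (fun α IH => fun b =>
    if hα : α = 0 then b
    else if h : fundSeq b α < α then IH (fundSeq b α) h (g b)
    else 0)

open scoped Classical in
/-- The coordinate bound `|α|`: the maximum of all coefficients and (hereditarily)
exponent-bounds appearing in the Cantor normal form of `α`. -/
noncomputable def coordBound : Ordinal.{0} → ℕ :=
  WellFounded.fix Ordinal.lt_wf (fun α IH =>
    ((Ordinal.CNF Ordinal.omega0 α).map (fun p =>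
      max (p.2.card.toNat) (if h : p.1 < α then IH p.1 h else 0))).foldr max 0)
open scoped Classical in
lemma fundSeq_eq (x : ℕ) (α : Ordinal.{0}) : fundSeq x α =
    if hα : α = 0 then 0
    else
      match hL : (Ordinal.CNF Ordinal.omega0 α).getLast? with
      | none => 0
      | some p =>
        if p.1 = 0 then Ordinal.pred α
        else if h : p.1 < α then
          ofCNF ((Ordinal.CNF Ordinal.omega0 α).dropLast
            ++ [(p.1, p.2 - 1), (fundSeq x p.1, (x : Ordinal))])
        else 0 := by
  rw [fundSeq, WellFounded.fix_eq]


open scoped Classical in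
lemma coordBound_eq (α : Ordinal.{0}) : coordBound α =
    ((Ordinal.CNF Ordinal.omega0 α).map (fun p =>
      max (p.2.card.toNat) (if h : p.1 < α then coordBound p.1 else 0))).foldr max 0 := by
  rw [coordBound, WellFounded.fix_eq]

lemma foldr_ofCNF (L : List (Ordinal.{0} × Ordinal.{0})) (x : Ordinal.{0}) :
    L.foldr (fun p r => Ordinal.omega0 ^ p.1 * p.2 + r) x = ofCNF L + x := by
  induction L with
  | nil => simp [ofCNF]
  | cons p L ih => simp [ofCNF, List.foldr_cons, ih, add_assoc]

lemma ofCNF_append (L M : List (Ordinal.{0} × Ordinal.{0})) :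
    ofCNF (L ++ M) = ofCNF L + ofCNF M := by
  rw [ofCNF, List.foldr_append, ← ofCNF, foldr_ofCNF]

lemma ofCNF_cons (p : Ordinal.{0} × Ordinal.{0}) (L : List (Ordinal.{0} × Ordinal.{0})) :
    ofCNF (p :: L) = Ordinal.omega0 ^ p.1 * p.2 + ofCNF L := rfl

lemma ofCNF_CNF (α : Ordinal.{0}) : ofCNF (Ordinal.CNF Ordinal.omega0 α) = α :=
  Ordinal.CNF.foldr _ _

lemma le_foldr_max {l : List ℕ} {a : ℕ} (h : a ∈ l) : a ≤ l.foldr max 0 := by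
  induction l with
  | nil => simp at h
  | cons x l ih =>
    rcases List.mem_cons.mp h with rfl | h
    · exact le_max_left _ _
    · exact (ih h).trans (le_max_right _ _)

lemma coordBound_mem {γ : Ordinal.{0}} {p : Ordinal.{0} × Ordinal.{0}}
    (hp : p ∈ Ordinal.CNF Ordinal.omega0 γ) (h1 : p.1 < γ) :
    max (p.2.card.toNat) (coordBound p.1) ≤ coordBound γ := by
  rw [coordBound_eq γ]
  have := le_foldr_max (List.mem_map_of_mem
    (f := fun p => max (p.2.card.toNat) (if h : p.1 < γ then coordBound p.1 else 0)) hp)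
  simpa only [dif_pos h1] using this

lemma log_lt_self_of_lt_eps0 {γ : Ordinal.{0}} (h0 : γ ≠ 0) (hγ : γ < eps0) :
    Ordinal.log Ordinal.omega0 γ < γ := by
  rcases lt_or_eq_of_le (Ordinal.log_le_self Ordinal.omega0 γ) with h | h
  · exact h
  · exfalso
    have hfix : Ordinal.omega0 ^ γ ≤ γ := by
      conv_lhs => rw [← h]
      exact Ordinal.opow_log_le_self _ h0
    have : eps0 ≤ γ := Ordinal.nfp_le_fp
      (fun a b hab => Ordinal.opow_le_opow_right Ordinal.omega0_pos hab)
      zero_le hfix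
    exact absurd hγ (not_lt.mpr this)

lemma dvd_ofCNF (e : Ordinal.{0}) (L : List (Ordinal.{0} × Ordinal.{0}))
    (h : ∀ p ∈ L, e ≤ p.1) : Ordinal.omega0 ^ e ∣ ofCNF L := by
  induction L with
  | nil => simp [ofCNF]
  | cons p L ih =>
    rw [ofCNF_cons]
    obtain ⟨x, hx⟩ := ih (fun q hq => h q (List.mem_cons_of_mem _ hq))
    have he : e ≤ p.1 := h p List.mem_cons_self
    refine ⟨Ordinal.omega0 ^ (p.1 - e) * p.2 + x, ?_⟩
    rw [mul_add, hx, ← mul_assoc, ← Ordinal.opow_add, Ordinal.add_sub_cancel_of_le he]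

lemma mem_CNF_add (e ρ : Ordinal.{0}) (hρ : ρ < Ordinal.omega0 ^ e) :
    ∀ δ : Ordinal.{0}, Ordinal.omega0 ^ e ∣ δ →
      ∀ p ∈ Ordinal.CNF Ordinal.omega0 ρ, p ∈ Ordinal.CNF Ordinal.omega0 (δ + ρ) := by
  intro δ
  induction δ using Ordinal.induction with
  | _ δ IH =>
  intro hdvd p hp
  rcases eq_or_ne δ 0 with rfl | hδ0
  · simpa using hp
  have hωne : Ordinal.omega0 ^ Ordinal.log Ordinal.omega0 δ ≠ 0 :=
    Ordinal.opow_ne_zero _ Ordinal.omega0_ne_zero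
  set L := Ordinal.log Ordinal.omega0 δ with hLdef
  have hωe_le : Ordinal.omega0 ^ e ≤ δ := Ordinal.le_of_dvd hδ0 hdvd
  have heL : e ≤ L := (Ordinal.opow_le_iff_le_log Ordinal.one_lt_omega0 hδ0).mp hωe_le
  have hρL : ρ < Ordinal.omega0 ^ L :=
    hρ.trans_le (Ordinal.opow_le_opow_right Ordinal.omega0_pos heL)
  have hmodlt : δ % Ordinal.omega0 ^ L < Ordinal.omega0 ^ L := Ordinal.mod_lt δ hωne
  have hz : δ % Ordinal.omega0 ^ L + ρ < Ordinal.omega0 ^ L :=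
    Ordinal.principal_add_omega0_opow L hmodlt hρL
  have hsum0 : δ + ρ ≠ 0 := by
    intro h
    exact hδ0 (le_antisymm (h ▸ le_self_add) zero_le)
  have hδsplit : Ordinal.omega0 ^ L * (δ / Ordinal.omega0 ^ L) + δ % Ordinal.omega0 ^ L = δ :=
    Ordinal.div_add_mod δ _
  have hmod : (δ + ρ) % Ordinal.omega0 ^ L = δ % Ordinal.omega0 ^ L + ρ := by
    conv_lhs => rw [← hδsplit, add_assoc]
    rw [Ordinal.mul_add_mod_self, Ordinal.mod_eq_of_lt hz]
  have hlog : Ordinal.log Ordinal.omega0 (δ + ρ) = L := by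
    apply le_antisymm
    · have hsumlt : δ + ρ < Ordinal.omega0 ^ Order.succ L :=
        Ordinal.principal_add_omega0_opow _
          (Ordinal.lt_opow_succ_log_self Ordinal.one_lt_omega0 δ)
          (hρL.trans_le (Ordinal.opow_le_opow_right Ordinal.omega0_pos (Order.le_succ L)))
      exact Order.lt_succ_iff.mp
        ((Ordinal.lt_opow_iff_log_lt Ordinal.one_lt_omega0 hsum0).mp hsumlt)
    · exact Ordinal.log_mono_right _ le_self_add
  have hdvdmod : Ordinal.omega0 ^ e ∣ δ % Ordinal.omega0 ^ L := by
    obtain ⟨x, hx⟩ := hdvd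
    refine ⟨x - Ordinal.omega0 ^ (L - e) * (δ / Ordinal.omega0 ^ L), ?_⟩
    rw [Ordinal.mod_def, Ordinal.mul_sub, ← mul_assoc, ← Ordinal.opow_add,
      Ordinal.add_sub_cancel_of_le heL, ← hx]
  have hmodδ : δ % Ordinal.omega0 ^ L < δ :=
    hmodlt.trans_le (Ordinal.opow_log_le_self _ hδ0)
  rw [Ordinal.CNF.ne_zero hsum0, hlog, hmod]
  exact List.mem_cons_of_mem _ (IH _ hmodδ hdvdmod p hp)

/-- If `|β| < b` and `β < α` (for ordinals below `ε₀`), then `β ≤ α[b]`. -/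
theorem le_fundSeq_of_lt (α β : Ordinal.{0}) (hα : α < eps0) (hβ : β < eps0)
    (b : ℕ) (hcoord : coordBound β < b) (hlt : β < α) :
    β ≤ fundSeq b α := by
  have main : ∀ α : Ordinal.{0}, α < eps0 →
      ∀ β : Ordinal.{0}, β < eps0 → coordBound β < b → β < α → β ≤ fundSeq b α := by
    clear hα hβ hcoord hlt α β
    intro α
    induction α using Ordinal.induction with
    | _ α IH =>
    intro hα β hβ hcoord hlt
    have hα0 : α ≠ 0 := ((zero_le (a := β)).trans_lt hlt).ne'
    obtain ⟨L', q, hsplit⟩ :=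
      (List.eq_nil_or_concat (Ordinal.CNF Ordinal.omega0 α)).resolve_left (by
        intro h
        have := Ordinal.CNF.foldr Ordinal.omega0 α
        rw [h] at this
        exact hα0 this.symm)
    rw [List.concat_eq_append] at hsplit
    obtain ⟨e, c⟩ := q
    have hmem : (e, c) ∈ Ordinal.CNF Ordinal.omega0 α := by
      rw [hsplit]; exact List.mem_append_right _ (List.mem_singleton_self _)
    have hc1 : 0 < c := Ordinal.CNF.snd_pos hmem
    have hcω : c < Ordinal.omega0 := Ordinal.CNF.snd_lt Ordinal.one_lt_omega0 hmem
    obtain ⟨m, rfl⟩ := Ordinal.lt_omega0.mp hcω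
    have hm1 : 1 ≤ m := by
      by_contra h
      interval_cases m
      simp at hc1
    have he_lt : e < α :=
      (Ordinal.CNF.fst_le_log hmem).trans_lt (log_lt_self_of_lt_eps0 hα0 hα)
    have hαeq : α = ofCNF L' + Ordinal.omega0 ^ e * m := by
      conv_lhs => rw [← ofCNF_CNF α, hsplit]
      rw [ofCNF_append, ofCNF_cons]
      simp [ofCNF]
    have hlast : (Ordinal.CNF Ordinal.omega0 α).getLast? = some (e, (m : Ordinal)) := by
      rw [hsplit]; exact List.getLast?_concat
    rw [fundSeq_eq, dif_neg hα0]
    split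
    next heq => rw [hlast] at heq; exact absurd heq (by simp)
    next p heq =>
      rw [hlast] at heq
      injection heq with heq
      subst heq
      dsimp only
      rcases eq_or_ne e 0 with rfl | he0
      · -- successor case
        rw [if_pos rfl]
        have hsucc : α = Order.succ (ofCNF L' + (m - 1 : ℕ)) := by
          rw [hαeq]
          simp only [Ordinal.opow_zero, one_mul]
          rw [← Ordinal.add_one_eq_succ, add_assoc]
          norm_cast
          rw [Nat.sub_add_cancel hm1]
        rw [hsucc, Ordinal.pred_succ]
        exact Order.lt_succ_iff.mp (hsucc ▸ hlt)
      · -- limit-ish case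
        rw [if_neg he0, dif_pos he_lt, hsplit, List.dropLast_concat,
          ofCNF_append]
        have hofCNF2 : ofCNF [((e : Ordinal), (m:Ordinal) - 1),
            (fundSeq b e, (b : Ordinal))] =
            Ordinal.omega0 ^ e * ((m:Ordinal) - 1) +
              Ordinal.omega0 ^ fundSeq b e * b := by
          simp [ofCNF]
        rw [hofCNF2]
        set δ : Ordinal := ofCNF L' + Ordinal.omega0 ^ e * ((m:Ordinal) - 1) with hδ
        rw [← add_assoc, ← hδ]
        -- exponents of L' are ≥ e
        have hLexp : ∀ p ∈ L', e ≤ p.1 := by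
          have hs := (Ordinal.CNF.sortedGT Ordinal.omega0 α).pairwise
          rw [hsplit, List.map_append] at hs
          intro p hp
          have := (List.pairwise_append.mp hs).2.2 p.1
            (List.mem_map_of_mem hp) e (by simp)
          exact this.le
        have hδdvd : Ordinal.omega0 ^ e ∣ δ := by
          refine dvd_add (dvd_ofCNF e L' hLexp) ⟨(m:Ordinal) - 1, rfl⟩
        have hms : ((m : Ordinal) - 1) + 1 = (m : Ordinal) := by
          rw [← Nat.cast_one, ← Ordinal.natCast_sub, ← Nat.cast_add,
            Nat.sub_add_cancel hm1]
        have hαδ : α = δ + Ordinal.omega0 ^ e := by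
          rw [hαeq, hδ, add_assoc]
          congr 1
          conv_lhs => rw [← hms]
          rw [mul_add, mul_one]
        rcases le_or_gt β δ with hβδ | hδβ
        · exact hβδ.trans le_self_add
        · set ρ : Ordinal := β - δ with hρdef
          have hβρ : β = δ + ρ := (Ordinal.add_sub_cancel_of_le hδβ.le).symm
          have hρ0 : ρ ≠ 0 := by
            simp only [hρdef]
            rw [← pos_iff_ne_zero, Ordinal.lt_sub]
            simpa using hδβ
          have hρe : ρ < Ordinal.omega0 ^ e := by
            apply Ordinal.sub_lt_of_lt_add
            · rwa [← hαδ]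
            · exact Ordinal.opow_pos e Ordinal.omega0_pos
          set e' : Ordinal := Ordinal.log Ordinal.omega0 ρ with he'def
          set c' : Ordinal := ρ / Ordinal.omega0 ^ e' with hc'def
          have hρβ : ρ ≤ β := Ordinal.sub_le_self _ _
          have hρeps : ρ < eps0 := hρβ.trans_lt hβ
          have he'ρ : e' < ρ := log_lt_self_of_lt_eps0 hρ0 hρeps
          have hc'ω : c' < Ordinal.omega0 := Ordinal.div_opow_log_lt ρ Ordinal.one_lt_omega0
          obtain ⟨n, hn⟩ := Ordinal.lt_omega0.mp hc'ω
          have hmemρ : (e', c') ∈ Ordinal.CNF Ordinal.omega0 ρ := by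
            rw [Ordinal.CNF.ne_zero hρ0]
            exact List.mem_cons_self
          have hmemβ : (e', c') ∈ Ordinal.CNF Ordinal.omega0 β := by
            rw [hβρ]
            exact mem_CNF_add e ρ hρe δ hδdvd _ hmemρ
          have hbd := coordBound_mem hmemβ (he'ρ.trans_le (hβρ ▸ le_add_self))
          have hcb : max ((c' : Ordinal).card.toNat) (coordBound e') < b :=
            lt_of_le_of_lt hbd hcoord
          have hnb : n < b := by
            have := (le_max_left _ _).trans_lt hcb
            rwa [hn, Ordinal.card_nat, Cardinal.toNat_natCast] at this
          have he'e : e' < e := (Ordinal.lt_opow_iff_log_lt Ordinal.one_lt_omega0 hρ0).mp hρe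
          have hE : e' ≤ fundSeq b e :=
            IH e he_lt (he_lt.trans hα) e' (he'ρ.trans hρeps)
              ((le_max_right _ _).trans_lt hcb) he'e
          have hρb : ρ ≤ Ordinal.omega0 ^ fundSeq b e * b := by
            have h1 : ρ < Ordinal.omega0 ^ e' * Order.succ c' :=
              Ordinal.lt_mul_succ_div ρ (Ordinal.opow_ne_zero e' Ordinal.omega0_ne_zero)
            have h2 : Order.succ c' ≤ (b : Ordinal) := by
              rw [hn, ← Ordinal.add_one_eq_succ, ← Nat.cast_one, ← Nat.cast_add]
              exact_mod_cast Nat.succ_le_of_lt hnb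
            calc ρ ≤ Ordinal.omega0 ^ e' * (b : Ordinal) :=
                  h1.le.trans (mul_le_mul_right h2 _)
              _ ≤ Ordinal.omega0 ^ fundSeq b e * b :=
                  mul_le_mul_left (Ordinal.opow_le_opow_right Ordinal.omega0_pos hE) _
          rw [hβρ]
          exact add_le_add_right hρb δ
  exact main α hα β hβ hcoord hlt
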